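/- Let m₁ be a positive real number and set n₂ = 4m₁. Then for θ ∈ (0, π/2), the equation 2m₁ + 4n₂ = m₁·((cot(θ/2))² + (tan(θ/2))²) + 4n₂·(tan θ)² holds if and only if (tan θ)² = 1/2; moreover, any such θ satisfies m₁·(tan(θ/2) − cot(θ/2)) + 2n₂·tan θ ≠ 0. (So in type II-BC₁ with n₂ = 4m₁ there is exactly one proper biharmonic regular orbit.) -/

import Mathlib

open Real

theorem stmt_10 (m₁ n₂ : ℝ) (hm₁ : 0 < m₁) (hn₂ : n₂ = 4 * m₁) :
    ∀ θ ∈ Set.Ioo 0 (π / 2),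
      (2 * m₁ + 4 * n₂ =
          m₁ * ((Real.cot (θ / 2)) ^ 2 + (Real.tan (θ / 2)) ^ 2) +
            4 * n₂ * (Real.tan θ) ^ 2 ↔
        (Real.tan θ) ^ 2 = 1 / 2) ∧
      (2 * m₁ + 4 * n₂ =
          m₁ * ((Real.cot (θ / 2)) ^ 2 + (Real.tan (θ / 2)) ^ 2) +
            4 * n₂ * (Real.tan θ) ^ 2 →
        m₁ * (Real.tan (θ / 2) - Real.cot (θ / 2)) + 2 * n₂ * Real.tan θ ≠ 0) := by
  intro θ hθ
  obtain ⟨h0, h1⟩ := hθ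
  have hpi := Real.pi_pos
  set t := Real.tan (θ / 2) with htdef
  have h0' : 0 < θ / 2 := by linarith
  have h1' : θ / 2 < π / 4 := by linarith
  have ht0 : 0 < t := Real.tan_pos_of_pos_of_lt_pi_div_two h0' (by linarith)
  have ht1 : t < 1 := by
    have := Real.tan_lt_tan_of_lt_of_lt_pi_div_two (by linarith : -(π/2) < θ/2)
      (by linarith : π/4 < π/2) h1'
    rwa [Real.tan_pi_div_four] at this
  have hcos : Real.cos (θ / 2) ≠ 0 :=
    (Real.cos_pos_of_mem_Ioo ⟨by linarith, by linarith⟩).ne'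
  have hsin : Real.sin (θ / 2) ≠ 0 :=
    (Real.sin_pos_of_pos_of_lt_pi h0' (by linarith)).ne'
  have hcot : Real.cot (θ / 2) = 1 / t := by
    rw [Real.cot_eq_cos_div_sin, htdef, Real.tan_eq_sin_div_cos]
    field_simp
  have htan : Real.tan θ = 2 * t / (1 - t ^ 2) := by
    have h2 : θ = 2 * (θ / 2) := by ring
    rw [h2, Real.tan_two_mul]
  have hden : 1 - t ^ 2 ≠ 0 := by nlinarith
  have htne : t ≠ 0 := ht0.ne'
  rw [hcot, htan, hn₂]
  have keyQ : ∀ H : 2 * m₁ + 4 * (4 * m₁) =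
      m₁ * ((1 / t) ^ 2 + t ^ 2) + 4 * (4 * m₁) * (2 * t / (1 - t ^ 2)) ^ 2,
      t ^ 4 - 10 * t ^ 2 + 1 = 0 := by
    intro H
    field_simp at H
    have hQ2 : m₁ * (t ^ 4 - 10 * t ^ 2 + 1) ^ 2 = 0 := by linear_combination (-m₁) * H
    have : (t ^ 4 - 10 * t ^ 2 + 1) ^ 2 = 0 := by
      rcases mul_eq_zero.mp hQ2 with h | h
      · exact absurd h hm₁.ne'
      · exact h
    exact pow_eq_zero_iff (n := 2) (by norm_num) |>.mp this
  constructor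
  · constructor
    · intro H
      have hQ := keyQ H
      have h8' : (1 - t ^ 2) ^ 2 = 8 * t ^ 2 := by linear_combination hQ
      rw [div_pow, h8']
      field_simp
      ring
    · intro H
      have h8 : 8 * t ^ 2 = (1 - t ^ 2) ^ 2 := by
        have H' := H
        rw [div_pow] at H'
        field_simp at H'
        linarith [H']
      field_simp
      linear_combination (-(8 * t ^ 2 - (1 - t ^ 2) ^ 2)) * h8
  · intro H Hc
    have hQ := keyQ H
    have h8' : (1 - t ^ 2) ^ 2 = 8 * t ^ 2 := by linear_combination hQ
    field_simp at Hc
    have : m₁ * (16 * t ^ 2 - (1 - t ^ 2) ^ 2) = 0 := by linear_combination Hc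
    rw [h8'] at this
    have h8m : m₁ * (8 * t ^ 2) = 0 := by linear_combination this
    have := mul_pos hm₁ (by positivity : (0:ℝ) < 8 * t ^ 2)
    linarith
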